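/- Let A and B be Hermitian n×n complex matrices, let p ≥ 1 be an integer, and let 0 ≤ ℓ ≤ 2p − 2. Then the trace tr(A B^{2p−2−ℓ} A B^{ℓ}) is a real number and satisfies tr(A B^{2p−2−ℓ} A B^{ℓ}) ≤ tr(A² B^{2p−2}). -/

import Mathlib

noncomputable section

open Matrix Finset

lemma scalar_key {a b : ℕ} (hpar : a % 2 = b % 2) (x y : ℝ) :
    0 ≤ (x ^ a - y ^ a) * (x ^ b - y ^ b) := by
  rcases Nat.even_or_odd a with ha | ha
  · have hb : Even b := by
      rcases Nat.even_or_odd b with h | h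
      · exact h
      · exfalso; rw [Nat.even_iff] at ha; rw [Nat.odd_iff] at h; omega
    rw [← Even.pow_abs ha x, ← Even.pow_abs ha y, ← Even.pow_abs hb x, ← Even.pow_abs hb y]
    rcases le_total |x| |y| with h | h
    · have := mul_nonneg (neg_nonneg.2 (sub_nonpos.2 (pow_le_pow_left₀ (abs_nonneg x) h a)))
        (neg_nonneg.2 (sub_nonpos.2 (pow_le_pow_left₀ (abs_nonneg x) h b)))
      rwa [neg_mul_neg] at this
    · exact mul_nonneg (sub_nonneg.2 (pow_le_pow_left₀ (abs_nonneg y) h a))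
        (sub_nonneg.2 (pow_le_pow_left₀ (abs_nonneg y) h b))
  · have hb : Odd b := by
      rcases Nat.even_or_odd b with h | h
      · exfalso; rw [Nat.odd_iff] at ha; rw [Nat.even_iff] at h; omega
      · exact h
    rcases le_total x y with h | h
    · have := mul_nonneg (neg_nonneg.2 (sub_nonpos.2 ((ha.strictMono_pow (R := ℝ)).monotone h)))
        (neg_nonneg.2 (sub_nonpos.2 ((hb.strictMono_pow (R := ℝ)).monotone h)))
      rwa [neg_mul_neg] at this
    · exact mul_nonneg (sub_nonneg.2 ((ha.strictMono_pow (R := ℝ)).monotone h))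
        (sub_nonneg.2 ((hb.strictMono_pow (R := ℝ)).monotone h))

lemma real_sum_ineq (n : ℕ) (w : Fin n → Fin n → ℝ) (hw : ∀ i j, 0 ≤ w i j)
    (hsym : ∀ i j, w i j = w j i) (d : Fin n → ℝ) {a b : ℕ} (hpar : a % 2 = b % 2) :
    ∑ i, ∑ j, w i j * (d j ^ a * d i ^ b) ≤ ∑ i, ∑ j, w i j * d i ^ (a + b) := by
  have key : 0 ≤ ∑ i, ∑ j, w i j * ((d i ^ a - d j ^ a) * (d i ^ b - d j ^ b)) :=
    Finset.sum_nonneg fun i _ => Finset.sum_nonneg fun j _ =>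
      mul_nonneg (hw i j) (scalar_key hpar (d i) (d j))
  have expand : ∑ i, ∑ j, w i j * ((d i ^ a - d j ^ a) * (d i ^ b - d j ^ b))
      = ((∑ i, ∑ j, w i j * d i ^ (a + b)) + ∑ i, ∑ j, w i j * d j ^ (a + b))
        - ((∑ i, ∑ j, w i j * (d j ^ a * d i ^ b)) + ∑ i, ∑ j, w i j * (d i ^ a * d j ^ b)) := by
    rw [← Finset.sum_add_distrib, ← Finset.sum_add_distrib, ← Finset.sum_sub_distrib]
    refine Finset.sum_congr rfl fun i _ => ?_
    rw [← Finset.sum_add_distrib, ← Finset.sum_add_distrib, ← Finset.sum_sub_distrib]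
    refine Finset.sum_congr rfl fun j _ => ?_
    ring
  have h1 : (∑ i, ∑ j, w i j * d j ^ (a + b)) = ∑ i, ∑ j, w i j * d i ^ (a + b) := by
    rw [Finset.sum_comm]
    exact Finset.sum_congr rfl fun i _ => Finset.sum_congr rfl fun j _ => by rw [hsym]
  have h2 : (∑ i, ∑ j, w i j * (d i ^ a * d j ^ b)) = ∑ i, ∑ j, w i j * (d j ^ a * d i ^ b) := by
    rw [Finset.sum_comm]
    exact Finset.sum_congr rfl fun i _ => Finset.sum_congr rfl fun j _ => by rw [hsym]
  rw [expand, h1, h2] at key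
  linarith

lemma trace_conj_diag {n : ℕ} (C : Matrix (Fin n) (Fin n) ℂ) (hC : C.IsHermitian)
    (d : Fin n → ℝ) (a b : ℕ) :
    Matrix.trace (C * (Matrix.diagonal fun i => (d i : ℂ)) ^ a * C
        * (Matrix.diagonal fun i => (d i : ℂ)) ^ b)
      = ((∑ i, ∑ j, Complex.normSq (C i j) * (d j ^ a * d i ^ b) : ℝ) : ℂ) := by
  have hdg : ∀ k : ℕ, (Matrix.diagonal fun i => (d i : ℂ)) ^ k
      = Matrix.diagonal fun i => ((d i : ℂ)) ^ k := by
    intro k; rw [Matrix.diagonal_pow]; rfl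
  have entry : ∀ i j : Fin n, C i j * C j i = (Complex.normSq (C i j) : ℂ) := by
    intro i j
    have h2 : C j i = star (C i j) := by rw [← hC.apply i j, star_star]
    rw [h2, Complex.star_def]
    exact Complex.mul_conj (C i j)
  rw [hdg, hdg]
  push_cast
  simp only [Matrix.trace, Matrix.diag, Matrix.mul_diagonal]
  simp only [Matrix.mul_apply, Matrix.mul_diagonal, Finset.sum_mul]
  refine Finset.sum_congr rfl fun i _ => Finset.sum_congr rfl fun j _ => ?_
  simp only [Matrix.diagonal_apply, ite_mul, mul_ite, mul_zero, zero_mul,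
    Finset.sum_ite_eq', Finset.mem_univ, if_true]
  rw [← entry i j]
  push_cast
  ring

lemma myConjPow {n : ℕ} (U D : Matrix (Fin n) (Fin n) ℂ)
    (h1 : U * star U = 1) (h2 : star U * U = 1) (k : ℕ) :
    (U * D * star U) ^ k = U * D ^ k * star U := by
  induction k with
  | zero => simp [h1]
  | succ k ih =>
    rw [pow_succ, ih, pow_succ]
    calc U * D ^ k * star U * (U * D * star U)
        = U * D ^ k * (star U * U) * D * star U := by
          simp only [Matrix.mul_assoc]
      _ = U * (D ^ k * D) * star U := by rw [h2]; simp only [Matrix.mul_assoc, Matrix.mul_one]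
      _ = _ := by simp only [Matrix.mul_assoc]

/-- trace rearrangement inequality.  For Hermitian `A, B`, an integer
`p ≥ 1` and `0 ≤ ℓ ≤ 2p - 2`, the trace `tr(A B^{2p-2-ℓ} A B^ℓ)` is real and bounded by
`tr(A² B^{2p-2})`. -/
theorem trace_rearrangement_inequality
    (n : ℕ) (hn : 1 ≤ n) (A B : Matrix (Fin n) (Fin n) ℂ)
    (hA : A.IsHermitian) (hB : B.IsHermitian)
    (p : ℕ) (hp : 1 ≤ p) (ℓ : ℕ) (hℓ : ℓ ≤ 2 * p - 2) :
    (Matrix.trace (A * B ^ (2 * p - 2 - ℓ) * A * B ^ ℓ)).im = 0 ∧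
    (Matrix.trace (A * B ^ (2 * p - 2 - ℓ) * A * B ^ ℓ)).re ≤
      (Matrix.trace (A ^ 2 * B ^ (2 * p - 2))).re := by
  set m := 2 * p - 2 with hm
  set a := m - ℓ with ha
  have hab : a + ℓ = m := Nat.sub_add_cancel hℓ
  have hpar : a % 2 = ℓ % 2 := by omega
  set U : Matrix (Fin n) (Fin n) ℂ := (hB.eigenvectorUnitary : Matrix (Fin n) (Fin n) ℂ)
    with hUdef
  set d : Fin n → ℝ := hB.eigenvalues with hddef
  set D : Matrix (Fin n) (Fin n) ℂ := Matrix.diagonal fun i => (d i : ℂ) with hDdef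
  have hU1 : U * star U = 1 := Matrix.mem_unitaryGroup_iff.mp hB.eigenvectorUnitary.2
  have hU2 : star U * U = 1 := Matrix.mem_unitaryGroup_iff'.mp hB.eigenvectorUnitary.2
  have hBspec : B = U * D * star U := by
    have := hB.spectral_theorem
    rw [Unitary.conjStarAlgAut_apply] at this
    exact this
  have hBpow : ∀ k : ℕ, B ^ k = U * D ^ k * star U := by
    intro k
    rw [hBspec, myConjPow U D hU1 hU2]
  set C : Matrix (Fin n) (Fin n) ℂ := star U * A * U with hCdef
  have hC : C.IsHermitian := by
    rw [hCdef, Matrix.star_eq_conjTranspose]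
    exact Matrix.isHermitian_conjTranspose_mul_mul U hA
  have key : ∀ k l : ℕ,
      Matrix.trace (A * B ^ k * A * B ^ l) = Matrix.trace (C * D ^ k * C * D ^ l) := by
    intro k l
    rw [hBpow k, hBpow l,
      show A * (U * D ^ k * star U) * A * (U * D ^ l * star U)
        = A * U * D ^ k * (star U * A * U) * D ^ l * star U by
          simp only [Matrix.mul_assoc],
      Matrix.trace_mul_comm]
    congr 1
    calc star U * (A * U * D ^ k * (star U * A * U) * D ^ l)
        = star U * A * U * D ^ k * (star U * A * U) * D ^ l := by
          simp only [Matrix.mul_assoc]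
      _ = C * D ^ k * C * D ^ l := by rw [← hCdef]
  have keyR : Matrix.trace (A ^ 2 * B ^ m) = Matrix.trace (C * D ^ 0 * C * D ^ m) := by
    rw [pow_two, hBpow m,
      show A * A * (U * D ^ m * star U) = A * A * U * D ^ m * star U by
        simp only [Matrix.mul_assoc],
      Matrix.trace_mul_comm]
    congr 1
    rw [pow_zero, Matrix.mul_one, hCdef]
    simp only [Matrix.mul_assoc]
    rw [show U * (star U * (A * (U * D ^ m))) = A * (U * D ^ m) from by
      rw [← Matrix.mul_assoc, hU1, Matrix.one_mul]]
  set w : Fin n → Fin n → ℝ := fun i j => Complex.normSq (C i j) with hwdef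
  have hw : ∀ i j, 0 ≤ w i j := fun i j => Complex.normSq_nonneg _
  have hsym : ∀ i j, w i j = w j i := by
    intro i j
    simp only [hwdef]
    rw [← hC.apply j i, Complex.star_def, Complex.normSq_conj]
  have hL : Matrix.trace (A * B ^ a * A * B ^ ℓ)
      = ((∑ i, ∑ j, w i j * (d j ^ a * d i ^ ℓ) : ℝ) : ℂ) := by
    rw [key a ℓ, hDdef, trace_conj_diag C hC d a ℓ]
  have hR : Matrix.trace (A ^ 2 * B ^ m)
      = ((∑ i, ∑ j, w i j * d i ^ (a + ℓ) : ℝ) : ℂ) := by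
    rw [keyR, hDdef, trace_conj_diag C hC d 0 m]
    congr 1
    refine Finset.sum_congr rfl fun i _ => Finset.sum_congr rfl fun j _ => ?_
    rw [pow_zero, one_mul, hab]
  refine ⟨by rw [hL, Complex.ofReal_im], ?_⟩
  rw [hL, hR, Complex.ofReal_re, Complex.ofReal_re]
  exact real_sum_ineq n w hw hsym d hpar
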